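/- Let 𝕂 be ℝ or ℂ and let r, d ≥ 2 be integers. There exists a nonempty open subset of the space Mat_d(𝕂)^r of r-tuples of d×d matrices over 𝕂 (with the metric d(𝒜,ℬ) = max_{1≤i≤r} ‖A_i − B_i‖) on which every r-tuple satisfies the finiteness property. -/

import Mathlib

open Filter Topology

noncomputable section

namespace JSRPaper

variable {𝕂 : Type*} [RCLike 𝕂] {ι : Type*} [Fintype ι] [DecidableEq ι] {r : ℕ}

/-- The Euclidean operator norm of a matrix, i.e. the operator norm induced by the
Euclidean norm on `𝕂^ι`. -/
noncomputable def eNorm (A : Matrix ι ι 𝕂) : ℝ :=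
  ‖Matrix.toEuclideanCLM (𝕜 := 𝕂) A‖

/-- The product `A_{i n} ⋯ A_{i 1}` associated to the word `i : Fin n → Fin r`. -/
noncomputable def wordProd (A : Fin r → Matrix ι ι 𝕂) {n : ℕ} (i : Fin n → Fin r) :
    Matrix ι ι 𝕂 :=
  ((List.ofFn fun k => A (i k)).reverse).prod

/-- The joint spectral radius of the tuple `A`, expressed via the standard
characterisation `ϱ(𝒜) = inf_n max_{|i| = n} ‖A_{i_n} ⋯ A_{i_1}‖^{1/n}`
(the infimum equals the limit). -/
noncomputable def jsr (A : Fin r → Matrix ι ι 𝕂) : ℝ :=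
  ⨅ n : ℕ+, (⨆ i : Fin (n : ℕ) → Fin r, eNorm (wordProd A i)) ^ ((n : ℝ)⁻¹)

/-- The spectral radius of a matrix, via Gelfand's formula
`ρ(A) = inf_k ‖A^k‖^{1/k}` (the infimum equals the limit). -/
noncomputable def specRad (A : Matrix ι ι 𝕂) : ℝ :=
  ⨅ k : ℕ+, eNorm (A ^ (k : ℕ)) ^ (((k : ℕ) : ℝ)⁻¹)

/-- `N` is a norm on `𝕂^ι`. -/
def IsNorm (N : EuclideanSpace 𝕂 ι → ℝ) : Prop :=
  (∀ v, N v = 0 ↔ v = 0) ∧ (∀ (c : 𝕂) (v), N (c • v) = ‖c‖ * N v) ∧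
    ∀ u v, N (u + v) ≤ N u + N v

/-- The operator norm of the matrix `A` induced by the norm `N` on `𝕂^ι`. -/
noncomputable def opNormWrt (N : EuclideanSpace 𝕂 ι → ℝ) (A : Matrix ι ι 𝕂) : ℝ :=
  sSup {x : ℝ | ∃ v, N v ≤ 1 ∧ x = N (Matrix.toEuclideanCLM (𝕜 := 𝕂) A v)}

/-- `N` is a Barabanov norm for the tuple `A` : it is a norm and
`ϱ(𝒜) ‖v‖ = max_i ‖A_i v‖` for every `v`. -/
def IsBarabanov (A : Fin r → Matrix ι ι 𝕂) (N : EuclideanSpace 𝕂 ι → ℝ) : Prop :=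
  IsNorm N ∧ ∀ v, jsr A * N v = ⨆ i : Fin r, N (Matrix.toEuclideanCLM (𝕜 := 𝕂) (A i) v)

/-- The tuple `A` is irreducible: no subspace of `𝕂^ι` other than `⊥` and `⊤`
is invariant under every `A i`. -/
def IsIrreducible (A : Fin r → Matrix ι ι 𝕂) : Prop :=
  ∀ V : Submodule 𝕂 (EuclideanSpace 𝕂 ι),
    (∀ i, ∀ v ∈ V, Matrix.toEuclideanCLM (𝕜 := 𝕂) (A i) v ∈ V) → V = ⊥ ∨ V = ⊤

/-- Two words of length `n` are rotation equivalent if one is a cyclic shift of the other. -/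
def RotEquiv {n : ℕ} (z w : Fin n → Fin r) : Prop :=
  ∃ k : ℕ, ∀ j : Fin n, z j = w ⟨(j.val + k) % n, Nat.mod_lt _ j.pos⟩

/-- The tuple `A` satisfies the strong finiteness hypothesis with characteristic word `ω`:
for every Barabanov norm `N` for `A`, every word of the same length as `ω` which is not
rotation equivalent to `ω` has `N`-operator-norm product strictly less than `ϱ(𝒜)^n`. -/
def StrongFinHyp (A : Fin r → Matrix ι ι 𝕂) {n : ℕ} (ω : Fin n → Fin r) : Prop :=
  ∀ N : EuclideanSpace 𝕂 ι → ℝ, IsBarabanov A N →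
    ∀ z : Fin n → Fin r, ¬ RotEquiv z ω → opNormWrt N (wordProd A z) < jsr A ^ n

/-- The tuple `A` is relatively product bounded : `ϱ(𝒜) > 0` and the set of normalised
products `ϱ(𝒜)^{-n} A_{i_n} ⋯ A_{i_1}` is bounded. -/
def RelProdBounded (A : Fin r → Matrix ι ι 𝕂) : Prop :=
  0 < jsr A ∧ ∃ C : ℝ, ∀ (n : ℕ) (i : Fin n → Fin r), eNorm (wordProd A i) ≤ C * jsr A ^ n

/-- The limit semigroup `𝒮(𝒜) = ⋂_{m ≥ 1} closure (⋃_{n ≥ m} ϱ(𝒜)^{-n} 𝒜_n)`,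
written out via the metric characterisation of the closure. -/
def limitSemigroup (A : Fin r → Matrix ι ι 𝕂) : Set (Matrix ι ι 𝕂) :=
  {B | ∀ m : ℕ, ∀ ε > (0 : ℝ), ∃ n : ℕ, m ≤ n ∧ ∃ i : Fin n → Fin r,
    eNorm ((jsr A ^ n)⁻¹ • wordProd A i - B) < ε}

/-- The tuple `A` has the rank one property: it is relatively product bounded and every
nonzero element of the limit semigroup has rank one. -/
def RankOneProp (A : Fin r → Matrix ι ι 𝕂) : Prop :=
  RelProdBounded A ∧ ∀ B ∈ limitSemigroup A, B ≠ 0 → B.rank = 1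

/-- The product `A_{i n} ⋯ A_{i 1}` along the first `n` terms of the sequence `i`
(indexed from `1`). -/
noncomputable def seqProd (A : Fin r → Matrix ι ι 𝕂) (i : ℕ → Fin r) (n : ℕ) :
    Matrix ι ι 𝕂 :=
  wordProd A fun k : Fin n => i (k.val + 1)

/-- The unbounded agreements property: any two sequences whose normalised partial
products do not tend to zero (i.e. `limsup ‖A_{i(n)} ⋯ A_{i(1)}‖ / ϱ(𝒜)^n > 0`) contain
arbitrarily long identical blocks. -/
def UnboundedAgreements (A : Fin r → Matrix ι ι 𝕂) : Prop :=
  ∀ N : ℕ, ∀ i₁ i₂ : ℕ → Fin r,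
    (∃ c > (0 : ℝ), ∀ m : ℕ, ∃ n, m ≤ n ∧ c ≤ eNorm (seqProd A i₁ n) / jsr A ^ n) →
    (∃ c > (0 : ℝ), ∀ m : ℕ, ∃ n, m ≤ n ∧ c ≤ eNorm (seqProd A i₂ n) / jsr A ^ n) →
    ∃ n₁ n₂ : ℕ, ∀ k : ℕ, 1 ≤ k → k ≤ N → i₁ (n₁ + k) = i₂ (n₂ + k)

/-- The finiteness property: some periodic product realises the joint spectral radius,
`ρ(A_{i_n} ⋯ A_{i_1})^{1/n} = ϱ(𝒜)`. -/
def FinitenessProp (A : Fin r → Matrix ι ι 𝕂) : Prop :=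
  ∃ (n : ℕ) (_ : 0 < n) (i : Fin n → Fin r),
    specRad (wordProd A i) ^ ((n : ℝ)⁻¹) = jsr A

/-- The second exterior power (second compound matrix) of a `d × d` matrix, written
in the standard basis `(e_i ∧ e_j)_{i < j}` of `⋀² 𝕂^d`. -/
noncomputable def ext2 {d : ℕ} (A : Matrix (Fin d) (Fin d) 𝕂) :
    Matrix {p : Fin d × Fin d // p.1 < p.2} {p : Fin d × Fin d // p.1 < p.2} 𝕂 :=
  fun p q => A p.1.1 q.1.1 * A p.1.2 q.1.2 - A p.1.1 q.1.2 * A p.1.2 q.1.1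

/-- The word `ω` of length `n` is a power of a shorter word. -/
def IsPowerOfShorter {n : ℕ} (ω : Fin n → Fin r) : Prop :=
  ∃ (q : ℕ) (h0 : 0 < q) (h1 : q < n), q ∣ n ∧
    ∀ j : Fin n, ω j = ω ⟨j.val % q, lt_trans (Nat.mod_lt _ h0) h1⟩

/-- `Θ_ω(𝒜)`: the supremum of `‖A_{ω_n} ⋯ A_{ω_1}‖^{1/n}` over all Barabanov norms. -/
noncomputable def Theta {n : ℕ} (ω : Fin n → Fin r) (A : Fin r → Matrix ι ι 𝕂) : ℝ :=
  sSup {x : ℝ | ∃ N, IsBarabanov A N ∧ x = opNormWrt N (wordProd A ω) ^ ((n : ℝ)⁻¹)}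

end JSRPaper
open Filter Topology Matrix JSRPaper

noncomputable section

namespace JSRAux

variable {𝕂 : Type*} [RCLike 𝕂] {d r : ℕ}

/-! ### Euclidean norm on plain vectors -/

/-- Euclidean norm of a plain vector. -/
noncomputable def normE (x : Fin d → 𝕂) : ℝ := Real.sqrt (∑ k, ‖x k‖ ^ 2)

lemma normE_nonneg (x : Fin d → 𝕂) : 0 ≤ normE x := Real.sqrt_nonneg _

lemma norm_eq_normE (x : EuclideanSpace 𝕂 (Fin d)) : ‖x‖ = normE (x : Fin d → 𝕂) := by
  rw [EuclideanSpace.norm_eq]; rfl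

lemma coord_le_normE (x : Fin d → 𝕂) (k : Fin d) : ‖x k‖ ≤ normE x := by
  have h : ‖x k‖ ^ 2 ≤ ∑ j, ‖x j‖ ^ 2 :=
    Finset.single_le_sum (f := fun j => ‖x j‖ ^ 2) (fun j _ => by positivity) (Finset.mem_univ k)
  calc ‖x k‖ = Real.sqrt (‖x k‖ ^ 2) := by rw [Real.sqrt_sq (norm_nonneg _)]
    _ ≤ normE x := Real.sqrt_le_sqrt h

lemma normE_le_of_coords {x : Fin d → 𝕂} {C : ℝ} (h : ∀ k, ‖x k‖ ≤ C) (hC : 0 ≤ C) :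
    normE x ≤ Real.sqrt d * C := by
  have h2 : ∑ k, ‖x k‖ ^ 2 ≤ ∑ _k : Fin d, C ^ 2 :=
    Finset.sum_le_sum fun k _ => by have := h k; nlinarith [norm_nonneg (x k)]
  calc normE x ≤ Real.sqrt (∑ _k : Fin d, C ^ 2) := Real.sqrt_le_sqrt h2
    _ = Real.sqrt (d * C ^ 2) := by rw [Finset.sum_const, Finset.card_fin, nsmul_eq_mul]
    _ = Real.sqrt d * C := by
        rw [Real.sqrt_mul (by positivity), Real.sqrt_sq hC]

/-- Cauchy–Schwarz: `∑ ‖x k‖ ≤ √d * normE x`. -/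
lemma sum_norm_le (x : Fin d → 𝕂) : ∑ k, ‖x k‖ ≤ Real.sqrt d * normE x := by
  have h := sq_sum_le_card_mul_sum_sq (s := (Finset.univ : Finset (Fin d)))
    (f := fun k => ‖x k‖)
  simp only [Finset.card_fin] at h
  have h1 : (∑ k, ‖x k‖) ≤ Real.sqrt ((d : ℝ) * ∑ k, ‖x k‖ ^ 2) := by
    have hs : (0 : ℝ) ≤ ∑ k, ‖x k‖ := Finset.sum_nonneg fun k _ => norm_nonneg _
    nlinarith [Real.sq_sqrt (show (0:ℝ) ≤ (d : ℝ) * ∑ k, ‖x k‖ ^ 2 by positivity),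
      Real.sqrt_nonneg ((d : ℝ) * ∑ k, ‖x k‖ ^ 2)]
  calc (∑ k, ‖x k‖) ≤ Real.sqrt ((d : ℝ) * ∑ k, ‖x k‖ ^ 2) := h1
    _ = Real.sqrt d * normE x := by rw [Real.sqrt_mul (by positivity)]; rfl

lemma normE_smul (c : 𝕂) (x : Fin d → 𝕂) : normE (c • x) = ‖c‖ * normE x := by
  unfold normE
  have h : ∀ k, ‖(c • x) k‖ ^ 2 = ‖c‖ ^ 2 * ‖x k‖ ^ 2 := by
    intro k; simp [Pi.smul_apply, norm_smul]; ring
  rw [Finset.sum_congr rfl fun k _ => h k, ← Finset.mul_sum,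
    Real.sqrt_mul (by positivity), Real.sqrt_sq (norm_nonneg _)]

lemma normE_add_le (x y : Fin d → 𝕂) : normE (x + y) ≤ normE x + normE y := by
  have := norm_add_le (E := EuclideanSpace 𝕂 (Fin d)) (WithLp.toLp 2 x) (WithLp.toLp 2 y)
  rwa [norm_eq_normE, norm_eq_normE, norm_eq_normE] at this

lemma normE_sub_le (x y : Fin d → 𝕂) : normE (x - y) ≤ normE x + normE y := by
  have := norm_sub_le (E := EuclideanSpace 𝕂 (Fin d)) (WithLp.toLp 2 x) (WithLp.toLp 2 y)
  rwa [norm_eq_normE, norm_eq_normE, norm_eq_normE] at this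

/-! ### Bridge between `eNorm` and `normE`/`mulVec` -/

lemma eNorm_nonneg' (M : Matrix (Fin d) (Fin d) 𝕂) : 0 ≤ eNorm M := norm_nonneg _

lemma eNorm_le_bound {C : ℝ} (hC : 0 ≤ C) (M : Matrix (Fin d) (Fin d) 𝕂)
    (h : ∀ x : Fin d → 𝕂, normE (M *ᵥ x) ≤ C * normE x) : eNorm M ≤ C := by
  refine ContinuousLinearMap.opNorm_le_bound _ hC fun y => ?_
  rw [norm_eq_normE, norm_eq_normE]
  exact h y

lemma normE_mulVec_le (M : Matrix (Fin d) (Fin d) 𝕂) (x : Fin d → 𝕂) :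
    normE (M *ᵥ x) ≤ eNorm M * normE x := by
  have h := (Matrix.toEuclideanCLM (𝕜 := 𝕂) M).le_opNorm
    (show EuclideanSpace 𝕂 (Fin d) from WithLp.toLp 2 x)
  rw [norm_eq_normE, norm_eq_normE] at h
  exact h

lemma entry_le_eNorm (M : Matrix (Fin d) (Fin d) 𝕂) (k j : Fin d) : ‖M k j‖ ≤ eNorm M := by
  have h1 : normE (M *ᵥ Pi.single j (1:𝕂)) ≤ eNorm M * normE (Pi.single j (1:𝕂)) :=
    normE_mulVec_le M _
  have h2 : normE (Pi.single j (1:𝕂)) = 1 := by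
    unfold normE
    have hsum : (∑ k, ‖(Pi.single j (1:𝕂) : Fin d → 𝕂) k‖ ^ 2) = 1 := by
      rw [Finset.sum_eq_single j]
      · simp
      · intro b _ hb; simp [Pi.single_apply, hb]
      · simp
    rw [hsum, Real.sqrt_one]
  have h3 : ‖M k j‖ ≤ normE (M *ᵥ Pi.single j (1:𝕂)) := by
    have := coord_le_normE (M *ᵥ Pi.single j (1:𝕂)) k
    simpa using this
  rw [h2, mul_one] at h1
  exact h3.trans h1

/-! ### word product lemmas -/

lemma wordProd_zero (A : Fin r → Matrix (Fin d) (Fin d) 𝕂) (i : Fin 0 → Fin r) :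
    wordProd A i = 1 := by simp [wordProd]

lemma wordProd_succ (A : Fin r → Matrix (Fin d) (Fin d) 𝕂) {n : ℕ} (i : Fin (n+1) → Fin r) :
    wordProd A i = A (i (Fin.last n)) * wordProd A (fun k => i k.castSucc) := by
  unfold wordProd
  rw [List.ofFn_succ' (f := fun k => A (i k))]
  simp [List.concat_eq_append]

lemma wordProd_const (A : Fin r → Matrix (Fin d) (Fin d) 𝕂) (i₀ : Fin r) (n : ℕ) :
    wordProd A (fun _ : Fin n => i₀) = A i₀ ^ n := by
  induction n with
  | zero => simp [wordProd]
  | succ m ih => rw [wordProd_succ, ih]; exact (pow_succ' _ _).symm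

/-! ### jsr and specRad inequalities -/

section Spectral

variable (A : Fin r → Matrix (Fin d) (Fin d) 𝕂)

lemma supWords_nonneg [Nonempty (Fin r)] (n : ℕ) :
    0 ≤ ⨆ i : Fin n → Fin r, eNorm (wordProd A i) := by
  exact (eNorm_nonneg' _).trans
    (le_ciSup (f := fun i : Fin n → Fin r => eNorm (wordProd A i))
      (Set.Finite.bddAbove (Set.finite_range _)) (fun _ => Classical.arbitrary _))

lemma supWords_le [Nonempty (Fin r)] {n : ℕ} {C : ℝ}
    (h : ∀ i : Fin n → Fin r, eNorm (wordProd A i) ≤ C) :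
    (⨆ i : Fin n → Fin r, eNorm (wordProd A i)) ≤ C :=
  ciSup_le h

lemma jsr_bddBelow [Nonempty (Fin r)] :
    BddBelow (Set.range fun n : ℕ+ =>
      (⨆ i : Fin (n : ℕ) → Fin r, eNorm (wordProd A i)) ^ ((n : ℝ)⁻¹)) := by
  refine ⟨0, ?_⟩
  rintro x ⟨n, rfl⟩
  exact Real.rpow_nonneg (supWords_nonneg A _) _

lemma jsr_nonneg [Nonempty (Fin r)] : 0 ≤ jsr A := by
  rw [jsr]
  exact le_ciInf fun n => Real.rpow_nonneg (supWords_nonneg A _) _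

lemma specRad_bddBelow (M : Matrix (Fin d) (Fin d) 𝕂) :
    BddBelow (Set.range fun k : ℕ+ => eNorm (M ^ (k : ℕ)) ^ (((k : ℕ) : ℝ)⁻¹)) := by
  refine ⟨0, ?_⟩
  rintro x ⟨k, rfl⟩
  exact Real.rpow_nonneg (eNorm_nonneg' _) _

/-- `specRad (A i₀) ≤ jsr A`. -/
lemma specRad_le_jsr [Nonempty (Fin r)] (i₀ : Fin r) : specRad (A i₀) ≤ jsr A := by
  rw [jsr]
  refine le_ciInf fun n => ?_
  have h1 : specRad (A i₀) ≤ eNorm (A i₀ ^ (n : ℕ)) ^ (((n : ℕ) : ℝ)⁻¹) :=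
    ciInf_le (specRad_bddBelow _) n
  refine h1.trans ?_
  apply Real.rpow_le_rpow (eNorm_nonneg' _) ?_ (by positivity)
  rw [← wordProd_const A i₀ (n : ℕ)]
  exact le_ciSup (f := fun i : Fin (n:ℕ) → Fin r => eNorm (wordProd A i))
    (Set.Finite.bddAbove (Set.finite_range _)) _

lemma pow_mulVec_eigvec {M : Matrix (Fin d) (Fin d) 𝕂} {lam : 𝕂} {v : Fin d → 𝕂}
    (hv : M *ᵥ v = lam • v) (k : ℕ) : (M ^ k) *ᵥ v = (lam ^ k) • v := by
  induction k with
  | zero => simp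
  | succ m ih =>
      rw [pow_succ, ← Matrix.mulVec_mulVec, hv, Matrix.mulVec_smul, ih, smul_smul, pow_succ]
      ring_nf

/-- An eigenvalue modulus is a lower bound for `specRad`. -/
lemma eig_le_specRad {M : Matrix (Fin d) (Fin d) 𝕂} {lam : 𝕂} {v : Fin d → 𝕂}
    (hv : M *ᵥ v = lam • v) (hv0 : 0 < normE v) : ‖lam‖ ≤ specRad M := by
  rw [specRad]
  refine le_ciInf fun k => ?_
  have h1 : normE ((M ^ (k:ℕ)) *ᵥ v) = ‖lam‖ ^ (k:ℕ) * normE v := by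
    rw [pow_mulVec_eigvec hv, normE_smul, norm_pow]
  have h2 : ‖lam‖ ^ (k:ℕ) * normE v ≤ eNorm (M ^ (k:ℕ)) * normE v := by
    rw [← h1]; exact normE_mulVec_le _ _
  have h3 : ‖lam‖ ^ (k:ℕ) ≤ eNorm (M ^ (k:ℕ)) := le_of_mul_le_mul_right h2 hv0
  have h4 : (‖lam‖ ^ (k:ℕ)) ^ (((k:ℕ) : ℝ)⁻¹) ≤ eNorm (M ^ (k:ℕ)) ^ (((k:ℕ) : ℝ)⁻¹) :=
    Real.rpow_le_rpow (by positivity) h3 (by positivity)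
  have hk : ((k : ℕ) : ℝ) ≠ 0 := Nat.cast_ne_zero.mpr k.pos.ne' 
  calc ‖lam‖ = (‖lam‖ ^ (k:ℕ)) ^ (((k:ℕ) : ℝ)⁻¹) := by
        rw [← Real.rpow_natCast ‖lam‖ (k:ℕ), ← Real.rpow_mul (norm_nonneg _),
          mul_inv_cancel₀ hk, Real.rpow_one]
    _ ≤ _ := h4

/-- Upper bound for `jsr` from uniform geometric norm bounds on word products. -/
lemma jsr_le [Nonempty (Fin r)] {s C : ℝ} (hs : 0 < s) (hC : 1 ≤ C)
    (h : ∀ (n : ℕ) (i : Fin n → Fin r), eNorm (wordProd A i) ≤ C * s ^ n) :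
    jsr A ≤ s := by
  refine le_of_forall_pos_le_add fun ε hε => ?_
  obtain ⟨m, hm⟩ := pow_unbounded_of_one_lt C (show (1:ℝ) < 1 + ε / s by have := div_pos hε hs; linarith)
  set n : ℕ+ := ⟨m + 1, Nat.succ_pos m⟩
  have hmono : (1 + ε / s) ^ m ≤ (1 + ε / s) ^ (n : ℕ) :=
    pow_le_pow_right₀ (by have := div_pos hε hs; linarith) (Nat.le_succ m)
  have hsup : (⨆ i : Fin (n : ℕ) → Fin r, eNorm (wordProd A i)) ≤ (s + ε) ^ (n : ℕ) := by
    refine supWords_le A fun i => (h _ i).trans ?_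
    have : C * s ^ (n:ℕ) ≤ (1 + ε / s) ^ (n:ℕ) * s ^ (n:ℕ) := by
      have : C ≤ (1 + ε/s) ^ (n:ℕ) := (hm.le.trans hmono)
      exact mul_le_mul_of_nonneg_right this (by positivity)
    refine this.trans ?_
    rw [← mul_pow]
    have : (1 + ε / s) * s = s + ε := by field_simp
    rw [this]
  have h1 : jsr A ≤ (⨆ i : Fin (n : ℕ) → Fin r, eNorm (wordProd A i)) ^ ((n : ℝ)⁻¹) :=
    ciInf_le (jsr_bddBelow A) n
  refine h1.trans ?_
  have h2 : (⨆ i : Fin (n : ℕ) → Fin r, eNorm (wordProd A i)) ^ ((n : ℝ)⁻¹) ≤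
      ((s + ε) ^ (n : ℕ)) ^ ((n : ℝ)⁻¹) :=
    Real.rpow_le_rpow (supWords_nonneg A _) hsup (by positivity)
  refine h2.trans ?_
  have hn : ((n : ℕ) : ℝ) ≠ 0 := Nat.cast_ne_zero.mpr n.pos.ne' 
  rw [← Real.rpow_natCast (s + ε) (n : ℕ), ← Real.rpow_mul (by positivity)]
  rw [show ((n:ℕ) : ℝ) * ((n:ℕ) : ℝ)⁻¹ = 1 from mul_inv_cancel₀ hn]
  rw [Real.rpow_one]

/-- If `specRad (A 0) = jsr A` then the finiteness property holds (via the word `(0)`). -/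
lemma finitenessProp_of_eq [NeZero r] (h : specRad (A 0) = jsr A) : FinitenessProp A := by
  refine ⟨1, one_pos, fun _ => 0, ?_⟩
  have hw : wordProd A (fun _ : Fin 1 => (0 : Fin r)) = A 0 := by
    simp [wordProd, List.ofFn_succ]
  rw [hw, show ((1:ℕ) : ℝ)⁻¹ = 1 by norm_num, Real.rpow_one, h]

end Spectral

end JSRAux

namespace JSRAux

variable {𝕂 : Type*} [RCLike 𝕂] {d r : ℕ}

section Eigen

set_option maxHeartbeats 1000000 in
/-- Every matrix with all entries within `(100 d²)⁻¹` of `1` has an eigenvector near the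
all-ones vector, with eigenvalue near `d`. -/
lemma exists_eigen {B : Matrix (Fin d) (Fin d) 𝕂} (hd : 2 ≤ d)
    (hB : ∀ k j, ‖B k j - 1‖ ≤ ((100:ℝ) * d ^ 2)⁻¹) :
    ∃ (lam : 𝕂) (v : Fin d → 𝕂),
      B *ᵥ v = lam • v ∧ (∀ k, ‖v k - 1‖ ≤ 1/8) ∧ ‖lam - (d : 𝕂)‖ ≤ d / 4 := by
  haveI : NeZero d := ⟨by omega⟩
  have _inst : Nonempty (Fin d) := ⟨⟨0, by omega⟩⟩
  set η : ℝ := ((100:ℝ) * d ^ 2)⁻¹ with hηdef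
  have hd2 : (2:ℝ) ≤ (d:ℝ) := by exact_mod_cast hd
  have hdpos : (0:ℝ) < d := by linarith
  have hηpos : 0 < η := by positivity
  have hηd : (d:ℝ) * η ≤ 1/200 := by
    have h1 : (d:ℝ) * ((100:ℝ) * d^2)⁻¹ = ((100:ℝ)*d)⁻¹ := by field_simp
    rw [hηdef, h1, show (1:ℝ)/200 = ((200:ℝ))⁻¹ by norm_num]
    exact inv_anti₀ (by norm_num) (by linarith)
  have hη400 : η ≤ 1/400 := by
    have : (2:ℝ) * η ≤ (d:ℝ) * η := by nlinarith
    linarith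
  -- the entrywise error and row-sum operators
  set Ez : (Fin d → 𝕂) → Fin d → 𝕂 := fun z k => ∑ j, (B k j - 1) * z j with hEzdef
  set σz : (Fin d → 𝕂) → 𝕂 := fun z => ∑ j, z j with hσdef
  have hmv : ∀ (z : Fin d → 𝕂) (k : Fin d), (B *ᵥ z) k = Ez z k + σz z := by
    intro z k
    simp only [Matrix.mulVec, dotProduct, hEzdef, hσdef]
    rw [← Finset.sum_add_distrib]
    exact Finset.sum_congr rfl fun j _ => by ring
  have hEzlin : ∀ (x y : Fin d → 𝕂) (k : Fin d), Ez (x - y) k = Ez x k - Ez y k := by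
    intro x y k
    simp only [hEzdef, ← Finset.sum_sub_distrib]
    exact Finset.sum_congr rfl fun j _ => by simp [Pi.sub_apply]; ring
  have hσlin : ∀ (x y : Fin d → 𝕂), σz (x - y) = σz x - σz y := by
    intro x y
    simp only [hσdef, ← Finset.sum_sub_distrib]
    exact Finset.sum_congr rfl fun j _ => by simp [Pi.sub_apply]
  have hEzbound : ∀ (z : Fin d → 𝕂) (k : Fin d), ‖Ez z k‖ ≤ d * η * ‖z‖ := by
    intro z k
    calc ‖Ez z k‖ ≤ ∑ j, ‖(B k j - 1) * z j‖ := norm_sum_le _ _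
      _ ≤ ∑ _j : Fin d, η * ‖z‖ := Finset.sum_le_sum fun j _ => by
          rw [norm_mul]
          exact mul_le_mul (hB k j) (norm_le_pi_norm z j) (norm_nonneg _) hηpos.le
      _ = d * η * ‖z‖ := by
          rw [Finset.sum_const, Finset.card_fin, nsmul_eq_mul]; ring
  have hσbound : ∀ z : Fin d → 𝕂, ‖σz z‖ ≤ d * ‖z‖ := by
    intro z
    calc ‖σz z‖ ≤ ∑ j, ‖z j‖ := norm_sum_le _ _
      _ ≤ ∑ _j : Fin d, ‖z‖ := Finset.sum_le_sum fun j _ => norm_le_pi_norm z j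
      _ = d * ‖z‖ := by rw [Finset.sum_const, Finset.card_fin, nsmul_eq_mul]
  have hσone : σz (1 : Fin d → 𝕂) = (d : 𝕂) := by
    simp [hσdef]
  have hσd : ∀ z : Fin d → 𝕂, ‖σz z - (d:𝕂)‖ ≤ d * ‖z - 1‖ := by
    intro z
    have : σz z - (d:𝕂) = σz (z - 1) := by rw [hσlin, hσone]
    rw [this]; exact hσbound _
  -- the invariant set
  set S : Set (Fin d → 𝕂) := {x | x 0 = 1 ∧ ‖x - 1‖ ≤ 1/2} with hSdef
  have hS : IsClosed S := by
    have : S = {x : Fin d → 𝕂 | x 0 = 1} ∩ {x : Fin d → 𝕂 | ‖x - 1‖ ≤ 1/2} := rfl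
    rw [this]
    exact (isClosed_eq (continuous_apply 0) continuous_const).inter
      (isClosed_le ((continuous_id.sub continuous_const).norm) continuous_const)
  have hmemnorm : ∀ x ∈ S, ‖x‖ ≤ 3/2 := by
    rintro x ⟨-, hx2⟩
    have h1 : ‖(1 : Fin d → 𝕂)‖ ≤ 1 := by
      rw [pi_norm_le_iff_of_nonneg (by norm_num)]
      intro i; simp
    calc ‖x‖ = ‖(x - 1) + 1‖ := by ring_nf
      _ ≤ ‖x - 1‖ + ‖(1 : Fin d → 𝕂)‖ := norm_add_le _ _
      _ ≤ 3/2 := by linarith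
  -- the first entry of B *ᵥ x is ≈ d on S
  have hβd : ∀ x ∈ S, ‖(B *ᵥ x) 0 - (d:𝕂)‖ ≤ 3 * d / 4 := by
    intro x hx
    have h1 : (B *ᵥ x) 0 - (d:𝕂) = Ez x 0 + (σz x - (d:𝕂)) := by rw [hmv]; ring
    rw [h1]
    have h2 := hEzbound x 0
    have h3 := hσd x
    have h4 := hmemnorm x hx
    have h5 : ‖x - 1‖ ≤ 1/2 := hx.2
    calc ‖Ez x 0 + (σz x - (d:𝕂))‖ ≤ ‖Ez x 0‖ + ‖σz x - (d:𝕂)‖ := norm_add_le _ _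
      _ ≤ d * η * (3/2) + d * (1/2) := add_le_add
          (h2.trans (mul_le_mul_of_nonneg_left h4 (by positivity)))
          (h3.trans (mul_le_mul_of_nonneg_left h5 (by positivity)))
      _ ≤ 3 * d / 4 := by nlinarith
  have hβlow : ∀ x ∈ S, (d:ℝ)/4 ≤ ‖(B *ᵥ x) 0‖ := by
    intro x hx
    have h1 := hβd x hx
    have h2 : ‖(d:𝕂)‖ = (d:ℝ) := by
      rw [RCLike.norm_natCast]
    have h3 : ‖(d:𝕂)‖ - ‖(B *ᵥ x) 0‖ ≤ ‖(B *ᵥ x) 0 - (d:𝕂)‖ := by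
      rw [norm_sub_rev]
      exact norm_sub_norm_le _ _
    rw [h2] at h3
    linarith
  have hβne : ∀ x ∈ S, (B *ᵥ x) 0 ≠ 0 := by
    intro x hx h0
    have := hβlow x hx
    rw [h0, norm_zero] at this
    linarith
  -- the normalised power map
  set F : (Fin d → 𝕂) → (Fin d → 𝕂) := fun x k => (B *ᵥ x) k / (B *ᵥ x) 0 with hFdef
  have hFcoord : ∀ x ∈ S, ∀ k, ‖F x k - 1‖ ≤ 12 * η := by
    intro x hx k
    have hne := hβne x hx
    have h1 : F x k - 1 = ((B *ᵥ x) k - (B *ᵥ x) 0) / (B *ᵥ x) 0 := by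
      simp only [hFdef]
      field_simp
    have h2 : (B *ᵥ x) k - (B *ᵥ x) 0 = Ez x k - Ez x 0 := by rw [hmv, hmv]; ring
    rw [h1, h2, norm_div]
    rw [div_le_iff₀ (lt_of_lt_of_le (by positivity) (hβlow x hx))]
    have h3 := hEzbound x k
    have h4 := hEzbound x 0
    have h5 := hmemnorm x hx
    have h6 := hβlow x hx
    calc ‖Ez x k - Ez x 0‖ ≤ ‖Ez x k‖ + ‖Ez x 0‖ := norm_sub_le _ _
      _ ≤ d * η * (3/2) + d * η * (3/2) := add_le_add
          (h3.trans (mul_le_mul_of_nonneg_left h5 (by positivity)))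
          (h4.trans (mul_le_mul_of_nonneg_left h5 (by positivity)))
      _ = 3 * (d * η) := by ring
      _ ≤ 12 * η * (d/4) := by ring_nf; linarith
      _ ≤ 12 * η * ‖(B *ᵥ x) 0‖ := by nlinarith
  have hFmem : Set.MapsTo F S S := by
    intro x hx
    refine ⟨by simp only [hFdef]; exact div_self (hβne x hx), ?_⟩
    rw [pi_norm_le_iff_of_nonneg (by norm_num)]
    intro k
    have := hFcoord x hx k
    have h12 : 12 * η ≤ 1/2 := by linarith
    simpa using this.trans h12
  -- contraction estimate
  have hlip : ∀ x ∈ S, ∀ y ∈ S, dist (F x) (F y) ≤ (1/2) * dist x y := by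
    intro x hx y hy
    rw [dist_eq_norm, dist_eq_norm]
    set D := ‖x - y‖ with hD
    have hD0 : 0 ≤ D := norm_nonneg _
    rw [pi_norm_le_iff_of_nonneg (by positivity)]
    intro k
    have hnex := hβne x hx
    have hney := hβne y hy
    have h1 : F x k - F y k =
        ((B *ᵥ x) k * (B *ᵥ y) 0 - (B *ᵥ y) k * (B *ᵥ x) 0) / ((B *ᵥ x) 0 * (B *ᵥ y) 0) := by
      simp only [hFdef]
      rw [div_sub_div _ _ hnex hney]
      congr 1
      ring
    have hnum : (B *ᵥ x) k * (B *ᵥ y) 0 - (B *ᵥ y) k * (B *ᵥ x) 0 =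
        σz y * (Ez (x - y) k - Ez (x - y) 0) + σz (y - x) * (Ez y k - Ez y 0) +
          (Ez (x - y) k * Ez y 0 + Ez y k * Ez (y - x) 0) := by
      rw [hmv x k, hmv y (0 : Fin d), hmv y k, hmv x (0 : Fin d),
        hEzlin x y k, hEzlin x y (0 : Fin d), hEzlin y x (0 : Fin d), hσlin y x]
      ring
    -- bound the numerator
    have hb1 : ‖Ez (x - y) k‖ ≤ d * η * D := hEzbound _ _
    have hb2 : ‖Ez (x - y) 0‖ ≤ d * η * D := hEzbound _ _
    have hb3 : ‖σz y‖ ≤ d * (3/2) :=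
      (hσbound y).trans (mul_le_mul_of_nonneg_left (hmemnorm y hy) hdpos.le)
    have hb4 : ‖σz (y - x)‖ ≤ d * D := by
      have := hσbound (y - x)
      rwa [show ‖y - x‖ = D by rw [hD, norm_sub_rev]] at this
    have hb5 : ‖Ez y k‖ ≤ d * η * (3/2) :=
      (hEzbound y k).trans (mul_le_mul_of_nonneg_left (hmemnorm y hy) (by positivity))
    have hb6 : ‖Ez y 0‖ ≤ d * η * (3/2) :=
      (hEzbound y (0 : Fin d)).trans
        (mul_le_mul_of_nonneg_left (hmemnorm y hy) (by positivity))
    have hb7 : ‖Ez (y - x) 0‖ ≤ d * η * D := by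
      have := hEzbound (y - x) 0
      rwa [show ‖y - x‖ = D by rw [hD, norm_sub_rev]] at this
    have hnumb : ‖(B *ᵥ x) k * (B *ᵥ y) 0 - (B *ᵥ y) k * (B *ᵥ x) 0‖ ≤ 7 * d^2 * η * D := by
      rw [hnum]
      have t1 : ‖σz y * (Ez (x - y) k - Ez (x - y) 0)‖ ≤ (d * (3/2)) * (2 * (d * η * D)) := by
        rw [norm_mul]
        refine mul_le_mul hb3 ?_ (norm_nonneg _) (by positivity)
        calc ‖Ez (x - y) k - Ez (x - y) 0‖ ≤ ‖Ez (x - y) k‖ + ‖Ez (x - y) 0‖ :=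
              norm_sub_le _ _
          _ ≤ 2 * (d * η * D) := by linarith
      have t2 : ‖σz (y - x) * (Ez y k - Ez y 0)‖ ≤ (d * D) * (2 * (d * η * (3/2))) := by
        rw [norm_mul]
        refine mul_le_mul hb4 ?_ (norm_nonneg _) (by positivity)
        calc ‖Ez y k - Ez y 0‖ ≤ ‖Ez y k‖ + ‖Ez y 0‖ := norm_sub_le _ _
          _ ≤ 2 * (d * η * (3/2)) := by linarith
      have t3 : ‖Ez (x - y) k * Ez y 0 + Ez y k * Ez (y - x) 0‖ ≤
          2 * ((d * η * D) * (d * η * (3/2))) := by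
        calc ‖Ez (x - y) k * Ez y 0 + Ez y k * Ez (y - x) 0‖ ≤
            ‖Ez (x - y) k * Ez y 0‖ + ‖Ez y k * Ez (y - x) 0‖ := norm_add_le _ _
          _ ≤ (d * η * D) * (d * η * (3/2)) + (d * η * (3/2)) * (d * η * D) := by
              rw [norm_mul, norm_mul]
              exact add_le_add (mul_le_mul hb1 hb6 (norm_nonneg _) (by positivity))
                (mul_le_mul hb5 hb7 (norm_nonneg _) (by positivity))
          _ = 2 * ((d * η * D) * (d * η * (3/2))) := by ring
      calc ‖σz y * (Ez (x - y) k - Ez (x - y) 0) + σz (y - x) * (Ez y k - Ez y 0) +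
            (Ez (x - y) k * Ez y 0 + Ez y k * Ez (y - x) 0)‖ ≤
          ‖σz y * (Ez (x - y) k - Ez (x - y) 0) + σz (y - x) * (Ez y k - Ez y 0)‖ +
            ‖Ez (x - y) k * Ez y 0 + Ez y k * Ez (y - x) 0‖ := norm_add_le _ _
        _ ≤ ‖σz y * (Ez (x - y) k - Ez (x - y) 0)‖ + ‖σz (y - x) * (Ez y k - Ez y 0)‖ +
            ‖Ez (x - y) k * Ez y 0 + Ez y k * Ez (y - x) 0‖ := by
              linarith [norm_add_le (σz y * (Ez (x - y) k - Ez (x - y) 0))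
                (σz (y - x) * (Ez y k - Ez y 0))]
        _ ≤ (d * (3/2)) * (2 * (d * η * D)) + (d * D) * (2 * (d * η * (3/2))) +
            2 * ((d * η * D) * (d * η * (3/2))) := by linarith
        _ ≤ 7 * d^2 * η * D := by
            nlinarith [mul_le_mul_of_nonneg_left (show 3 * η ≤ 1 by linarith)
              (mul_nonneg (mul_nonneg (sq_nonneg (d:ℝ)) hηpos.le) hD0)]
    have hden : (d:ℝ)/4 * (d/4) ≤ ‖(B *ᵥ x) 0 * (B *ᵥ y) 0‖ := by
      rw [norm_mul]
      exact mul_le_mul (hβlow x hx) (hβlow y hy) (by positivity) (norm_nonneg _)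
    have hFsub : ‖F x k - F y k‖ ≤ 7 * d^2 * η * D / (d/4 * (d/4)) := by
      rw [h1, norm_div]
      apply div_le_div₀ (by positivity) hnumb (by positivity) hden
    have h116 : 7 * (d:ℝ)^2 * η * D / (d/4 * (d/4)) = 112 * η * D := by
      field_simp; ring
    have : ‖F x k - F y k‖ ≤ 112 * η * D := by rw [← h116]; exact hFsub
    have h112 : 112 * η * D ≤ (1/2) * D := by
      nlinarith [mul_le_mul_of_nonneg_right hη400 hD0]
    have hfinal := this.trans h112
    simpa [Pi.sub_apply] using hfinal
  -- apply the Banach fixed point theorem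
  have hcontr : ContractingWith (1/2 : NNReal) (hFmem.restrict F S S) := by
    constructor
    · rw [← NNReal.coe_lt_coe]; norm_num
    · apply LipschitzWith.of_dist_le_mul
      rintro ⟨x, hx⟩ ⟨y, hy⟩
      have h := hlip x hx y hy
      calc dist (hFmem.restrict F S S ⟨x, hx⟩) (hFmem.restrict F S S ⟨y, hy⟩)
          = dist (F x) (F y) := by rw [Subtype.dist_eq]; rfl
        _ ≤ (1/2) * dist x y := h
        _ = ((1/2 : NNReal) : ℝ) * dist (⟨x, hx⟩ : S) (⟨y, hy⟩ : S) := by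
            rw [Subtype.dist_eq]; norm_num
  have h1S : (1 : Fin d → 𝕂) ∈ S := ⟨rfl, by simp⟩
  obtain ⟨v, hvS, hfix, -, -⟩ :=
    hcontr.exists_fixedPoint' hS.isComplete hFmem h1S (edist_ne_top _ _)
  set lam : 𝕂 := (B *ᵥ v) 0 with hlamdef
  have hlamne : lam ≠ 0 := hβne v hvS
  have heig : B *ᵥ v = lam • v := by
    funext k
    have h1 : F v k = v k := congr_fun hfix k
    simp only [hFdef] at h1
    rw [← hlamdef, div_eq_iff hlamne] at h1
    have h2 : (B *ᵥ v) k = lam * v k := by rw [h1]; ring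
    rw [h2]; simp
  have hv8 : ∀ k, ‖v k - 1‖ ≤ 1/8 := by
    intro k
    have h1 : F v k = v k := congr_fun hfix k
    have h2 := hFcoord v hvS k
    rw [h1] at h2
    have : 12 * η ≤ 1/8 := by linarith
    exact h2.trans this
  have hvnorm : ‖v - 1‖ ≤ 1/8 := by
    rw [pi_norm_le_iff_of_nonneg (by norm_num)]
    intro k; simpa using hv8 k
  have hvn : ‖v‖ ≤ 9/8 := by
    have h1 : ‖(1 : Fin d → 𝕂)‖ ≤ 1 := by
      rw [pi_norm_le_iff_of_nonneg (by norm_num)]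
      intro i; simp
    calc ‖v‖ = ‖(v - 1) + 1‖ := by ring_nf
      _ ≤ ‖v - 1‖ + ‖(1 : Fin d → 𝕂)‖ := norm_add_le _ _
      _ ≤ 9/8 := by linarith
  have hlamd : ‖lam - (d:𝕂)‖ ≤ d/4 := by
    have h1 : lam - (d:𝕂) = Ez v 0 + (σz v - (d:𝕂)) := by rw [hlamdef, hmv]; ring
    rw [h1]
    have h2 := hEzbound v 0
    have h3 : ‖σz v - (d:𝕂)‖ ≤ d * (1/8) :=
      (hσd v).trans (mul_le_mul_of_nonneg_left hvnorm hdpos.le)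
    calc ‖Ez v 0 + (σz v - (d:𝕂))‖ ≤ ‖Ez v 0‖ + ‖σz v - (d:𝕂)‖ := norm_add_le _ _
      _ ≤ d * η * (9/8) + d * (1/8) := add_le_add
          (h2.trans (mul_le_mul_of_nonneg_left hvn (by positivity))) h3
      _ ≤ d/4 := by nlinarith
  exact ⟨lam, v, heig, hv8, hlamd⟩

end Eigen

end JSRAux

namespace JSRAux

variable {𝕂 : Type*} [RCLike 𝕂] {d r : ℕ}

set_option maxHeartbeats 1000000 in
/-- The central lemma: if `A 0` is entrywise close to the all-ones matrix and all the other
matrices are small, then `specRad (A 0) = jsr A` and hence the finiteness property holds. -/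
lemma key [NeZero r] (A : Fin r → Matrix (Fin d) (Fin d) 𝕂) (hd : 2 ≤ d)
    (hB : ∀ k j, ‖A 0 k j - 1‖ ≤ ((100:ℝ) * d ^ 2)⁻¹)
    (hsmall : ∀ i : Fin r, i ≠ 0 → ∀ k j, ‖A i k j‖ ≤ ((16:ℝ) * d)⁻¹) :
    FinitenessProp A := by
  haveI : NeZero d := ⟨by omega⟩
  haveI : Nonempty (Fin r) := ⟨0⟩
  set η : ℝ := ((100:ℝ) * d ^ 2)⁻¹ with hηdef
  set δ : ℝ := ((16:ℝ) * d)⁻¹ with hδdef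
  have hd2 : (2:ℝ) ≤ (d:ℝ) := by exact_mod_cast hd
  have hdpos : (0:ℝ) < d := by linarith
  have hηpos : (0:ℝ) < η := by rw [hηdef]; positivity
  have hδpos : (0:ℝ) < δ := by rw [hδdef]; positivity
  have hη400 : η ≤ 1/400 := by
    rw [hηdef, show (1:ℝ)/400 = ((400:ℝ))⁻¹ by norm_num]
    apply inv_anti₀ (by norm_num)
    nlinarith
  set sd : ℝ := Real.sqrt d with hsddef
  have hsd0 : 0 < sd := Real.sqrt_pos.mpr hdpos
  have hsdsq : sd ^ 2 = d := Real.sq_sqrt hdpos.le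
  have hsd1 : 1 ≤ sd := by nlinarith
  have hsdd : sd ≤ d := by nlinarith
  -- right and left eigenvectors
  obtain ⟨lam, v, hv, hv8, hlamd⟩ := exists_eigen hd hB
  obtain ⟨lam', u, hu, hu8, hlam'd⟩ := exists_eigen (B := (A 0)ᵀ) hd
    (by intro k j; rw [Matrix.transpose_apply]; exact hB j k)
  have huB : u ᵥ* A 0 = lam' • u := by rw [← Matrix.mulVec_transpose]; exact hu
  -- coordinatewise bounds
  have hvk : ∀ k, ‖v k‖ ≤ 9/8 := by
    intro k
    have h := hv8 k
    calc ‖v k‖ = ‖(v k - 1) + 1‖ := by ring_nf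
      _ ≤ ‖v k - 1‖ + ‖(1:𝕂)‖ := norm_add_le _ _
      _ ≤ 9/8 := by rw [norm_one]; linarith
  have hvk' : ∀ k, 7/8 ≤ ‖v k‖ := by
    intro k
    have h1 := hv8 k
    have h2 : ‖(1:𝕂)‖ ≤ ‖v k‖ + ‖v k - 1‖ := by
      calc ‖(1:𝕂)‖ = ‖v k - (v k - 1)‖ := by ring_nf
        _ ≤ ‖v k‖ + ‖v k - 1‖ := norm_sub_le _ _
    rw [norm_one] at h2
    linarith
  have huk : ∀ k, ‖u k‖ ≤ 9/8 := by
    intro k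
    have h := hu8 k
    calc ‖u k‖ = ‖(u k - 1) + 1‖ := by ring_nf
      _ ≤ ‖u k - 1‖ + ‖(1:𝕂)‖ := norm_add_le _ _
      _ ≤ 9/8 := by rw [norm_one]; linarith
  -- μ = u ⬝ᵥ v ≈ d
  set μ : 𝕂 := u ⬝ᵥ v with hμdef
  have hμd : ‖μ - (d:𝕂)‖ ≤ d/3 := by
    have h1 : μ - (d:𝕂) = ∑ k, (u k * v k - 1) := by
      rw [hμdef, dotProduct, Finset.sum_sub_distrib]
      congr 1
      rw [Finset.sum_const, Finset.card_fin, nsmul_eq_mul, mul_one]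
    rw [h1]
    calc ‖∑ k, (u k * v k - 1)‖ ≤ ∑ k, ‖u k * v k - 1‖ := norm_sum_le _ _
      _ ≤ ∑ _k : Fin d, (1:ℝ)/3 := by
          refine Finset.sum_le_sum fun k _ => ?_
          have e1 : u k * v k - 1 = (u k - 1) * v k + (v k - 1) := by ring
          rw [e1]
          calc ‖(u k - 1) * v k + (v k - 1)‖ ≤ ‖(u k - 1) * v k‖ + ‖v k - 1‖ :=
                norm_add_le _ _
            _ ≤ (1/8) * (9/8) + 1/8 := by
                rw [norm_mul]
                exact add_le_add (mul_le_mul (hu8 k) (hvk k) (norm_nonneg _)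
                  (by norm_num)) (hv8 k)
            _ ≤ 1/3 := by norm_num
      _ = d * (1/3) := by rw [Finset.sum_const, Finset.card_fin, nsmul_eq_mul]
      _ = d/3 := by ring
  have hμlow : 2*d/3 ≤ ‖μ‖ := by
    have h2 : ‖(d:𝕂)‖ = (d:ℝ) := RCLike.norm_natCast d
    have h3 : ‖(d:𝕂)‖ - ‖μ‖ ≤ ‖μ - (d:𝕂)‖ := by
      rw [norm_sub_rev]
      exact norm_sub_norm_le _ _
    rw [h2] at h3
    linarith
  have hμne : μ ≠ 0 := by
    intro h0
    rw [h0, norm_zero] at hμlow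
    linarith
  -- equality of the two eigenvalues
  have hlam_eq : lam' = lam := by
    have e1 : u ⬝ᵥ (A 0 *ᵥ v) = lam * μ := by
      rw [hv, dotProduct_smul, hμdef, smul_eq_mul]
    have e2 : u ⬝ᵥ (A 0 *ᵥ v) = lam' * μ := by
      rw [Matrix.dotProduct_mulVec, huB, smul_dotProduct, hμdef, smul_eq_mul]
    have := e2.symm.trans e1
    exact mul_right_cancel₀ hμne this
  rw [hlam_eq] at huB
  clear hlam'd hlam_eq
  set s : ℝ := ‖lam‖ with hsdef
  have hslow : 3*d/4 ≤ s := by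
    have h2 : ‖(d:𝕂)‖ = (d:ℝ) := RCLike.norm_natCast d
    have h3 : ‖(d:𝕂)‖ - ‖lam‖ ≤ ‖lam - (d:𝕂)‖ := by
      rw [norm_sub_rev]; exact norm_sub_norm_le _ _
    rw [h2] at h3
    linarith
  have hspos : 0 < s := by linarith
  -- projections
  set c : (Fin d → 𝕂) → 𝕂 := fun x => (u ⬝ᵥ x) / μ with hcdef
  set w : (Fin d → 𝕂) → (Fin d → 𝕂) := fun x => x - c x • v with hwdef
  set NN : (Fin d → 𝕂) → ℝ := fun x => max ‖c x‖ (normE (w x)) with hNNdef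
  have hNN0 : ∀ x, 0 ≤ NN x := fun x => le_max_of_le_left (norm_nonneg _)
  have hudot : ∀ x, ‖u ⬝ᵥ x‖ ≤ (9/8) * (sd * normE x) := by
    intro x
    calc ‖u ⬝ᵥ x‖ ≤ ∑ k, ‖u k * x k‖ := norm_sum_le _ _
      _ ≤ ∑ k, (9/8) * ‖x k‖ := by
          refine Finset.sum_le_sum fun k _ => ?_
          rw [norm_mul]
          exact mul_le_mul_of_nonneg_right (huk k) (norm_nonneg _)
      _ = (9/8) * ∑ k, ‖x k‖ := by rw [Finset.mul_sum]
      _ ≤ (9/8) * (sd * normE x) :=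
          mul_le_mul_of_nonneg_left (sum_norm_le x) (by norm_num)
  have hc2 : ∀ x, ‖c x‖ ≤ 2 * normE x := by
    intro x
    rw [hcdef]
    simp only [norm_div]
    rw [div_le_iff₀ (lt_of_lt_of_le (by positivity) hμlow)]
    have h1 := hudot x
    have h2 := normE_nonneg x
    have h3 : (9/8) * (sd * normE x) ≤ 2 * normE x * (2*d/3) := by nlinarith
    have h4 : 2 * normE x * (2*d/3) ≤ 2 * normE x * ‖μ‖ := by
      apply mul_le_mul_of_nonneg_left hμlow (by positivity)
    linarith
  have hvnormE : normE v ≤ (3/2) * sd := by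
    have := normE_le_of_coords (x := v) (C := 9/8) hvk (by norm_num)
    calc normE v ≤ sd * (9/8) := this
      _ ≤ (3/2) * sd := by nlinarith
  have hwle : ∀ x, normE (w x) ≤ 4 * sd * normE x := by
    intro x
    rw [hwdef]
    have h1 : normE (x - c x • v) ≤ normE x + normE (c x • v) := normE_sub_le _ _
    rw [normE_smul] at h1
    have h2 := hc2 x
    have h3 := normE_nonneg x
    have h4 : ‖c x‖ * normE v ≤ (2 * normE x) * ((3/2) * sd) :=
      mul_le_mul h2 hvnormE (normE_nonneg _) (by positivity)
    calc normE (x - c x • v) ≤ normE x + ‖c x‖ * normE v := h1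
      _ ≤ normE x + (2 * normE x) * ((3/2) * sd) := by linarith
      _ = (1 + 3 * sd) * normE x := by ring
      _ ≤ 4 * sd * normE x := by nlinarith
  have hxle : ∀ x, normE x ≤ 3 * sd * NN x := by
    intro x
    have hx : x = w x + c x • v := by rw [hwdef]; ring_nf
    have h1 : normE x ≤ normE (w x) + ‖c x‖ * normE v := by
      conv_lhs => rw [hx]
      refine (normE_add_le _ _).trans ?_
      rw [normE_smul]
    have h2 : normE (w x) ≤ NN x := le_max_right _ _
    have h3 : ‖c x‖ ≤ NN x := le_max_left _ _
    have h4 : ‖c x‖ * normE v ≤ NN x * ((3/2) * sd) :=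
      mul_le_mul h3 hvnormE (normE_nonneg _) (hNN0 x)
    calc normE x ≤ NN x + NN x * ((3/2) * sd) := by linarith
      _ = (1 + (3/2) * sd) * NN x := by ring
      _ ≤ 3 * sd * NN x := by nlinarith [hNN0 x]
  have hNNle : ∀ x, NN x ≤ 4 * sd * normE x := by
    intro x
    refine max_le ?_ (hwle x)
    have := hc2 x
    have := normE_nonneg x
    nlinarith
  -- action of the eigendata
  have hcB : ∀ x, c (A 0 *ᵥ x) = lam * c x := by
    intro x
    rw [hcdef]
    simp only
    rw [Matrix.dotProduct_mulVec, huB, smul_dotProduct, smul_eq_mul, mul_div_assoc]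
  have hudotw : ∀ x, u ⬝ᵥ (w x) = 0 := by
    intro x
    rw [hwdef]
    simp only
    rw [dotProduct_sub, dotProduct_smul, smul_eq_mul, hcdef]
    simp only
    rw [← hμdef, div_mul_cancel₀ _ hμne]
    ring
  have hwB : ∀ x, w (A 0 *ᵥ x) = A 0 *ᵥ (w x) := by
    intro x
    rw [hwdef]
    simp only
    rw [hcB, Matrix.mulVec_sub, Matrix.mulVec_smul, hv]
    rw [smul_smul, mul_comm lam (c x)]
  -- the invariant-complement contraction
  have hW : ∀ y : Fin d → 𝕂, u ⬝ᵥ y = 0 → normE (A 0 *ᵥ y) ≤ s * normE y := by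
    intro y hy
    have hsum : ∑ j, y j = ∑ j, (1 - u j) * y j := by
      have h0 : ∑ j, u j * y j = 0 := hy
      rw [← sub_eq_zero]
      rw [← Finset.sum_sub_distrib]
      rw [show (0:𝕂) = ∑ j, u j * y j from h0.symm]
      exact Finset.sum_congr rfl fun j _ => by ring
    have hcoord : ∀ k, ‖(A 0 *ᵥ y) k‖ ≤ (η + 1/8) * (sd * normE y) := by
      intro k
      have h1 : (A 0 *ᵥ y) k = (∑ j, (A 0 k j - 1) * y j) + ∑ j, y j := by
        simp only [Matrix.mulVec, dotProduct]
        rw [← Finset.sum_add_distrib]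
        exact Finset.sum_congr rfl fun j _ => by ring
      rw [h1]
      have h2 : ‖∑ j, (A 0 k j - 1) * y j‖ ≤ η * ∑ j, ‖y j‖ := by
        calc ‖∑ j, (A 0 k j - 1) * y j‖ ≤ ∑ j, ‖(A 0 k j - 1) * y j‖ := norm_sum_le _ _
          _ ≤ ∑ j, η * ‖y j‖ := Finset.sum_le_sum fun j _ => by
              rw [norm_mul]
              exact mul_le_mul_of_nonneg_right (hB k j) (norm_nonneg _)
          _ = η * ∑ j, ‖y j‖ := by rw [Finset.mul_sum]
      have h3 : ‖∑ j, y j‖ ≤ (1/8) * ∑ j, ‖y j‖ := by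
        rw [hsum]
        calc ‖∑ j, (1 - u j) * y j‖ ≤ ∑ j, ‖(1 - u j) * y j‖ := norm_sum_le _ _
          _ ≤ ∑ j, (1/8) * ‖y j‖ := Finset.sum_le_sum fun j _ => by
              rw [norm_mul]
              refine mul_le_mul_of_nonneg_right ?_ (norm_nonneg _)
              rw [norm_sub_rev]
              exact hu8 j
          _ = (1/8) * ∑ j, ‖y j‖ := by rw [Finset.mul_sum]
      have h4 := sum_norm_le y
      have h5 : (0:ℝ) ≤ ∑ j, ‖y j‖ := Finset.sum_nonneg fun j _ => norm_nonneg _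
      calc ‖(∑ j, (A 0 k j - 1) * y j) + ∑ j, y j‖ ≤
          ‖∑ j, (A 0 k j - 1) * y j‖ + ‖∑ j, y j‖ := norm_add_le _ _
        _ ≤ (η + 1/8) * ∑ j, ‖y j‖ := by linarith
        _ ≤ (η + 1/8) * (sd * normE y) :=
            mul_le_mul_of_nonneg_left h4 (by linarith)
    have h6 : normE (A 0 *ᵥ y) ≤ sd * ((η + 1/8) * (sd * normE y)) :=
      normE_le_of_coords hcoord
        (mul_nonneg (by linarith) (mul_nonneg hsd0.le (normE_nonneg y)))
    calc normE (A 0 *ᵥ y) ≤ sd * ((η + 1/8) * (sd * normE y)) := h6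
      _ = (η + 1/8) * (d * normE y) := by
          rw [show sd * ((η + 1/8) * (sd * normE y)) = (η + 1/8) * (sd^2 * normE y) by ring,
            hsdsq]
      _ ≤ (3*d/4) * normE y := by
          nlinarith [mul_le_mul_of_nonneg_right (show η + 1/8 ≤ 3/4 by linarith)
            (mul_nonneg hdpos.le (normE_nonneg y))]
      _ ≤ s * normE y := mul_le_mul_of_nonneg_right hslow (normE_nonneg _)
  -- per-letter bounds
  have hL0 : ∀ x, NN (A 0 *ᵥ x) ≤ s * NN x := by
    intro x
    rw [hNNdef]
    simp only
    rw [hcB, hwB, norm_mul]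
    refine max_le ?_ ?_
    · exact le_trans (mul_le_mul_of_nonneg_left (le_max_left _ _) (norm_nonneg lam))
        (le_of_eq rfl)
    · refine (hW (w x) (hudotw x)).trans ?_
      exact mul_le_mul_of_nonneg_left (le_max_right _ _) hspos.le
  have hLi : ∀ i : Fin r, i ≠ 0 → ∀ x, NN (A i *ᵥ x) ≤ s * NN x := by
    intro i hi x
    have hcoord : ∀ k, ‖(A i *ᵥ x) k‖ ≤ δ * (sd * normE x) := by
      intro k
      calc ‖(A i *ᵥ x) k‖ ≤ ∑ j, ‖A i k j * x j‖ := by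
            simp only [Matrix.mulVec, dotProduct]
            exact norm_sum_le _ _
        _ ≤ ∑ j, δ * ‖x j‖ := Finset.sum_le_sum fun j _ => by
            rw [norm_mul]
            exact mul_le_mul_of_nonneg_right (hsmall i hi k j) (norm_nonneg _)
        _ = δ * ∑ j, ‖x j‖ := by rw [Finset.mul_sum]
        _ ≤ δ * (sd * normE x) := mul_le_mul_of_nonneg_left (sum_norm_le x) hδpos.le
    have h1 : normE (A i *ᵥ x) ≤ sd * (δ * (sd * normE x)) :=
      normE_le_of_coords hcoord
        (mul_nonneg hδpos.le (mul_nonneg hsd0.le (normE_nonneg x)))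
    have h2 : normE (A i *ᵥ x) ≤ δ * (d * normE x) := by
      calc normE (A i *ᵥ x) ≤ sd * (δ * (sd * normE x)) := h1
        _ = δ * (sd^2 * normE x) := by ring
        _ = δ * (d * normE x) := by rw [hsdsq]
    have h3 : NN (A i *ᵥ x) ≤ 4 * sd * normE (A i *ᵥ x) := hNNle _
    have h4 : normE x ≤ 3 * sd * NN x := hxle x
    have hδd : δ * d = 1/16 := by
      rw [hδdef]; field_simp
    calc NN (A i *ᵥ x) ≤ 4 * sd * (δ * (d * normE x)) := by
          refine h3.trans ?_
          exact mul_le_mul_of_nonneg_left h2 (by positivity)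
      _ ≤ 4 * sd * (δ * (d * (3 * sd * NN x))) := by
          refine mul_le_mul_of_nonneg_left ?_ (by positivity : (0:ℝ) ≤ 4 * sd)
          refine mul_le_mul_of_nonneg_left ?_ hδpos.le
          exact mul_le_mul_of_nonneg_left h4 hdpos.le
      _ = 12 * (δ * d) * sd^2 * NN x := by ring
      _ = (3/4) * (d:ℝ) * NN x := by rw [hδd, hsdsq]; ring
      _ ≤ s * NN x := mul_le_mul_of_nonneg_right (by linarith) (hNN0 x)
  have hletter : ∀ (i₀ : Fin r) (x : Fin d → 𝕂), NN (A i₀ *ᵥ x) ≤ s * NN x := by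
    intro i₀ x
    by_cases h : i₀ = 0
    · rw [h]; exact hL0 x
    · exact hLi i₀ h x
  -- word bound by induction
  have hword : ∀ (n : ℕ) (i : Fin n → Fin r) (x : Fin d → 𝕂),
      NN (wordProd A i *ᵥ x) ≤ s ^ n * NN x := by
    intro n
    induction n with
    | zero =>
        intro i x
        rw [wordProd_zero, Matrix.one_mulVec, pow_zero, one_mul]
    | succ m ih =>
        intro i x
        rw [wordProd_succ, ← Matrix.mulVec_mulVec]
        calc NN (A (i (Fin.last m)) *ᵥ (wordProd A (fun k => i k.castSucc) *ᵥ x)) ≤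
            s * NN (wordProd A (fun k => i k.castSucc) *ᵥ x) := hletter _ _
          _ ≤ s * (s ^ m * NN x) := mul_le_mul_of_nonneg_left (ih _ x) hspos.le
          _ = s ^ (m + 1) * NN x := by ring
  -- Euclidean norm bound on all word products
  have heNorm : ∀ (n : ℕ) (i : Fin n → Fin r), eNorm (wordProd A i) ≤ (12 * d) * s ^ n := by
    intro n i
    refine eNorm_le_bound (by positivity) _ fun x => ?_
    have h1 : normE (wordProd A i *ᵥ x) ≤ 3 * sd * NN (wordProd A i *ᵥ x) := hxle _
    have h2 : NN (wordProd A i *ᵥ x) ≤ s ^ n * NN x := hword n i x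
    have h3 : NN x ≤ 4 * sd * normE x := hNNle x
    calc normE (wordProd A i *ᵥ x) ≤ 3 * sd * (s ^ n * NN x) := by
          refine h1.trans (mul_le_mul_of_nonneg_left h2 (by positivity))
      _ ≤ 3 * sd * (s ^ n * (4 * sd * normE x)) := by
          refine mul_le_mul_of_nonneg_left ?_ (by positivity)
          exact mul_le_mul_of_nonneg_left h3 (by positivity)
      _ = 12 * sd^2 * s ^ n * normE x := by ring
      _ = 12 * d * s ^ n * normE x := by rw [hsdsq]
  -- conclude
  have hjsr : jsr A ≤ s := jsr_le A (C := 12 * d) hspos (by linarith) heNorm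
  have hv0 : 0 < normE v := by
    have h1 := hvk' 0
    have h2 := coord_le_normE v 0
    linarith
  have hspec : s ≤ specRad (A 0) := eig_le_specRad hv hv0
  have heq : specRad (A 0) = jsr A :=
    le_antisymm (specRad_le_jsr A 0) (hjsr.trans hspec)
  exact finitenessProp_of_eq A heq

end JSRAux


open JSRPaper in
/-- For `r, d ≥ 2` there is a nonempty open subset of the space of `r`-tuples of `d × d`
matrices over `𝕂` (metric `d(𝒜,ℬ) = max_i ‖A_i - B_i‖`) on which the finiteness
property holds everywhere. -/
theorem stmt_12 {𝕂 : Type*} [RCLike 𝕂] {r d : ℕ} (hr : 2 ≤ r) (hd : 2 ≤ d) :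
    ∃ U : Set (Fin r → Matrix (Fin d) (Fin d) 𝕂),
      U.Nonempty ∧
      (∀ A ∈ U, ∃ ε > (0 : ℝ), ∀ B : Fin r → Matrix (Fin d) (Fin d) 𝕂,
        (∀ i, eNorm (B i - A i) < ε) → B ∈ U) ∧
      ∀ A ∈ U, FinitenessProp A := by
  haveI : NeZero r := ⟨by omega⟩
  haveI : NeZero d := ⟨by omega⟩
  have hd2 : (2:ℝ) ≤ (d:ℝ) := by exact_mod_cast hd
  have hdpos : (0:ℝ) < d := by linarith
  set η : ℝ := ((100:ℝ) * d ^ 2)⁻¹ with hηdef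
  set δ : ℝ := ((16:ℝ) * d)⁻¹ with hδdef
  have hηpos : (0:ℝ) < η := by rw [hηdef]; positivity
  have hδpos : (0:ℝ) < δ := by rw [hδdef]; positivity
  refine ⟨{A | (∀ k j, ‖A 0 k j - 1‖ < η) ∧
    ∀ i : Fin r, i ≠ 0 → ∀ k j, ‖A i k j‖ < δ}, ?_, ?_, ?_⟩
  · -- nonempty
    refine ⟨fun i => if i = 0 then Matrix.of (fun _ _ => (1:𝕂)) else 0, ?_, ?_⟩
    · intro k j
      simpa using hηpos
    · intro i hi k j
      simp only [if_neg hi, Matrix.zero_apply, norm_zero]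
      exact hδpos
  · -- openness
    rintro A ⟨hA1, hA2⟩
    have hne1 : (Finset.univ : Finset (Fin d × Fin d)).Nonempty := Finset.univ_nonempty
    have hne2 : (Finset.univ : Finset (Fin r × Fin d × Fin d)).Nonempty := Finset.univ_nonempty
    set M0 : ℝ := Finset.univ.sup' hne1 (fun p : Fin d × Fin d => ‖A 0 p.1 p.2 - 1‖) with hM0def
    set M1 : ℝ := Finset.univ.sup' hne2 (fun p : Fin r × Fin d × Fin d =>
      if p.1 = 0 then 0 else ‖A p.1 p.2.1 p.2.2‖) with hM1def
    have hM0 : M0 < η := by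
      rw [hM0def, Finset.sup'_lt_iff]
      intro p _
      exact hA1 p.1 p.2
    have hM1 : M1 < δ := by
      rw [hM1def, Finset.sup'_lt_iff]
      intro p _
      by_cases h : p.1 = 0
      · rw [if_pos h]; exact hδpos
      · rw [if_neg h]; exact hA2 p.1 h p.2.1 p.2.2
    have hM0le : ∀ k j, ‖A 0 k j - 1‖ ≤ M0 := fun k j =>
      Finset.le_sup' (f := fun p : Fin d × Fin d => ‖A 0 p.1 p.2 - 1‖)
        (Finset.mem_univ ((k, j) : Fin d × Fin d))
    have hM1le : ∀ i : Fin r, i ≠ 0 → ∀ k j, ‖A i k j‖ ≤ M1 := by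
      intro i hi k j
      have h : (if i = 0 then (0:ℝ) else ‖A i k j‖) ≤ M1 :=
        Finset.le_sup' (f := fun p : Fin r × Fin d × Fin d =>
          if p.1 = 0 then 0 else ‖A p.1 p.2.1 p.2.2‖)
          (Finset.mem_univ ((i, k, j) : Fin r × Fin d × Fin d))
      rwa [if_neg hi] at h
    refine ⟨min (η - M0) (δ - M1), by simp [hM0, hM1], ?_⟩
    intro B hB
    constructor
    · intro k j
      have h1 : ‖B 0 k j - A 0 k j‖ ≤ eNorm (B 0 - A 0) := by
        have := JSRAux.entry_le_eNorm (B 0 - A 0) k j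
        simpa [Matrix.sub_apply] using this
      have h2 := (hB 0)
      have h3 : ‖B 0 k j - 1‖ ≤ ‖A 0 k j - 1‖ + ‖B 0 k j - A 0 k j‖ := by
        calc ‖B 0 k j - 1‖ = ‖(A 0 k j - 1) + (B 0 k j - A 0 k j)‖ := by ring_nf
          _ ≤ ‖A 0 k j - 1‖ + ‖B 0 k j - A 0 k j‖ := norm_add_le _ _
      have h4 : eNorm (B 0 - A 0) < η - M0 := lt_of_lt_of_le h2 (min_le_left _ _)
      have := hM0le k j
      linarith
    · intro i hi k j
      have h1 : ‖B i k j - A i k j‖ ≤ eNorm (B i - A i) := by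
        have := JSRAux.entry_le_eNorm (B i - A i) k j
        simpa [Matrix.sub_apply] using this
      have h2 := (hB i)
      have h3 : ‖B i k j‖ ≤ ‖A i k j‖ + ‖B i k j - A i k j‖ := by
        calc ‖B i k j‖ = ‖A i k j + (B i k j - A i k j)‖ := by ring_nf
          _ ≤ ‖A i k j‖ + ‖B i k j - A i k j‖ := norm_add_le _ _
      have h4 : eNorm (B i - A i) < δ - M1 := lt_of_lt_of_le h2 (min_le_right _ _)
      have := hM1le i hi k j
      linarith
  · -- finiteness property
    rintro A ⟨hA1, hA2⟩
    exact JSRAux.key A hd (fun k j => (hA1 k j).le) (fun i hi k j => (hA2 i hi k j).le)
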